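/- (Double role delegation, graph level.) Let P1 and P2 be disjoint sets of vertices with c1 ∈ P1 and c2 ∈ P2, let S = S(P1, P2, c1, c2) be the binary star graph, let w ∈ P2 \ {c2}, and let v ∈ P1 \ {c1}. Define G̃ = τ_w(τ_{c1}(τ_w(S)) − c1) and H = τ_v(τ_{c2}(τ_v(G̃)) − c2). Then H is a binary star graph centered at v and w: its edges are exactly the pairs {v, u} with u ∈ (P1 \ {c1, v}) ∪ {w}, together with the pairs {w, z} with z ∈ P2 \ {c2, w}; equivalently, H = S(P1', P2', v, w) with P1' = {v} ∪ (P2 \ {c2, w}) and P2' = {w} ∪ (P1 \ {c1, v}). -/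

import Mathlib

open SimpleGraph

universe u

/-- Local complementation of `G` at vertex `i`: adjacency is toggled exactly among
pairs of neighbors of `i`. -/
def localComp {V : Type u} (G : SimpleGraph V) (i : V) : SimpleGraph V where
  Adj a b := a ≠ b ∧
    ((G.Adj i a ∧ G.Adj i b) ∧ ¬ G.Adj a b ∨ ¬(G.Adj i a ∧ G.Adj i b) ∧ G.Adj a b)
  symm := by
    constructor
    rintro a b ⟨hne, h⟩
    refine ⟨hne.symm, ?_⟩
    rcases h with ⟨⟨ha, hb⟩, hab⟩ | ⟨h1, h2⟩
    · exact Or.inl ⟨⟨hb, ha⟩, fun h => hab h.symm⟩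
    · exact Or.inr ⟨fun h => h1 ⟨h.2, h.1⟩, h2.symm⟩
  loopless := ⟨fun a h => h.1 rfl⟩

/-- Vertex deletion `G − i`: remove every edge incident to `i` (the vertex stays,
isolated). -/
def delVert {V : Type u} (G : SimpleGraph V) (i : V) : SimpleGraph V where
  Adj a b := G.Adj a b ∧ a ≠ i ∧ b ≠ i
  symm := ⟨fun _ _ ⟨h, ha, hb⟩ => ⟨h.symm, hb, ha⟩⟩
  loopless := ⟨fun a h => G.loopless.irrefl a h.1⟩

/-- Deletion of a set `Z` of vertices: remove every edge incident to a vertex of `Z`. -/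
def delSet {V : Type u} (G : SimpleGraph V) (Z : Set V) : SimpleGraph V where
  Adj a b := G.Adj a b ∧ a ∉ Z ∧ b ∉ Z
  symm := ⟨fun _ _ ⟨h, ha, hb⟩ => ⟨h.symm, hb, ha⟩⟩
  loopless := ⟨fun a h => G.loopless.irrefl a h.1⟩

/-- Star graph on the set `W` with center `c`: edges are exactly the pairs `{c, u}`
for `u ∈ W \ {c}`. -/
def starGraph {V : Type u} (W : Set V) (c : V) : SimpleGraph V :=
  SimpleGraph.fromRel (fun a b => a = c ∧ b ∈ W \ {c})

/-- Complete graph on the set `A`: edges are exactly all pairs of distinct elements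
of `A`. -/
def completeOn {V : Type u} (A : Set V) : SimpleGraph V :=
  SimpleGraph.fromRel (fun a b => a ∈ A ∧ b ∈ A)

/-- Complete bipartite graph on parts `A` and `B`: edges are exactly the pairs
`{a, b}` with `a ∈ A` and `b ∈ B`. -/
def completeBipartiteOn {V : Type u} (A B : Set V) : SimpleGraph V :=
  SimpleGraph.fromRel (fun a b => a ∈ A ∧ b ∈ B)

/-- Binary star graph `S(P1, P2, c1, c2)`: edges are exactly the pairs `{c1, u}`
with `u ∈ P2` together with the pairs `{u, c2}` with `u ∈ P1`. -/
def binaryStar {V : Type u} (P1 P2 : Set V) (c1 c2 : V) : SimpleGraph V :=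
  SimpleGraph.fromRel (fun a b => (a = c1 ∧ b ∈ P2) ∨ (a ∈ P1 ∧ b = c2))

/-- The graph with the single edge `{c1, c2}`. -/
def singleEdge {V : Type u} (c1 c2 : V) : SimpleGraph V :=
  SimpleGraph.fromRel (fun a b => a = c1 ∧ b = c2)

lemma localComp_adj' {V : Type u} (G : SimpleGraph V) (i a b : V) :
    (localComp G i).Adj a b ↔ a ≠ b ∧
    ((G.Adj i a ∧ G.Adj i b) ∧ ¬ G.Adj a b ∨ ¬(G.Adj i a ∧ G.Adj i b) ∧ G.Adj a b) :=
  Iff.rfl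

lemma delVert_adj' {V : Type u} (G : SimpleGraph V) (i a b : V) :
    (delVert G i).Adj a b ↔ G.Adj a b ∧ a ≠ i ∧ b ≠ i := Iff.rfl

lemma localComp_eq_self' {V : Type u} {G : SimpleGraph V} {i : V}
    (h : ∀ a b, G.Adj i a → G.Adj i b → a = b) : localComp G i = G := by
  ext a b
  rw [localComp_adj']
  constructor
  · rintro ⟨hne, ⟨⟨ha, hb⟩, -⟩ | ⟨-, hab⟩⟩
    · exact absurd (h a b ha hb) hne
    · exact hab
  · intro hab
    exact ⟨hab.ne, Or.inr ⟨fun ⟨ha, hb⟩ => hab.ne (h a b ha hb), hab⟩⟩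

section Steps

variable {V : Type u} {P1 P2 : Set V} {c1 c2 w v : V}

set_option maxHeartbeats 800000 in
lemma stepA17 (hdisj : Disjoint P1 P2) (hc1 : c1 ∈ P1) (hc2 : c2 ∈ P2)
    (hwP2 : w ∈ P2) (hwc2 : w ≠ c2) :
    localComp (binaryStar P1 P2 c1 c2) w = binaryStar P1 P2 c1 c2 := by
  have hP12 : ∀ x, x ∈ P1 → x ∉ P2 := fun x h => Set.disjoint_left.mp hdisj h
  have hwP1 : w ∉ P1 := fun h => hP12 w h hwP2
  have hwc1 : w ≠ c1 := fun h => hwP1 (h ▸ hc1)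
  apply localComp_eq_self'
  intro a b ha hb
  simp only [binaryStar, SimpleGraph.fromRel_adj] at ha hb
  have ha' : a = c1 := by tauto
  have hb' : b = c1 := by tauto
  rw [ha', hb']

set_option maxHeartbeats 2000000 in
lemma stepB17 (hdisj : Disjoint P1 P2) (hc1 : c1 ∈ P1) (hc2 : c2 ∈ P2) :
    delVert (localComp (binaryStar P1 P2 c1 c2) c1) c1 =
      SimpleGraph.fromRel
        (fun a b => (a ∈ P2 ∧ b ∈ P2) ∨ (a ∈ P1 ∧ a ≠ c1 ∧ b = c2)) := by
  have hP12 : ∀ x, x ∈ P1 → x ∉ P2 := fun x h => Set.disjoint_left.mp hdisj h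
  have hc1P2 : c1 ∉ P2 := hP12 c1 hc1
  have hc1c2 : c1 ≠ c2 := fun h => hc1P2 (h ▸ hc2)
  have hNc1 : ∀ x, (binaryStar P1 P2 c1 c2).Adj c1 x ↔ x ∈ P2 := by
    intro x
    simp only [binaryStar, SimpleGraph.fromRel_adj]
    have f2 : x = c2 → x ∈ P2 := fun h => h ▸ hc2
    have f3 : x ∈ P2 → x ≠ c1 := fun h he => hc1P2 (he ▸ h)
    have f4 : c1 = x ↔ x = c1 := eq_comm
    tauto
  ext a b
  simp only [delVert_adj', localComp_adj', hNc1, binaryStar, SimpleGraph.fromRel_adj]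
  by_cases hab : a = b
  · simp [hab]
  have f1 : a = c1 → a ∈ P1 := fun h => h ▸ hc1
  have f2 : a = c2 → a ∈ P2 := fun h => h ▸ hc2
  have f3 : a ∈ P1 → a ∉ P2 := hP12 a
  have g1 : b = c1 → b ∈ P1 := fun h => h ▸ hc1
  have g2 : b = c2 → b ∈ P2 := fun h => h ▸ hc2
  have g3 : b ∈ P1 → b ∉ P2 := hP12 b
  by_cases hac2 : a = c2 <;> by_cases hbc2 : b = c2 <;>
    by_cases hac1 : a = c1 <;> by_cases hbc1 : b = c1 <;>
    simp_all <;> tauto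

set_option maxHeartbeats 2000000 in
lemma stepC17 (hdisj : Disjoint P1 P2) (hc1 : c1 ∈ P1) (hc2 : c2 ∈ P2)
    (hwP2 : w ∈ P2) (hwc2 : w ≠ c2) :
    localComp (SimpleGraph.fromRel
      (fun a b => (a ∈ P2 ∧ b ∈ P2) ∨ (a ∈ P1 ∧ a ≠ c1 ∧ b = c2))) w =
      SimpleGraph.fromRel
        (fun a b => (a = w ∧ b ∈ P2) ∨ (a ∈ P1 ∧ a ≠ c1 ∧ b = c2)) := by
  have hP12 : ∀ x, x ∈ P1 → x ∉ P2 := fun x h => Set.disjoint_left.mp hdisj h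
  have hwP1 : w ∉ P1 := fun h => hP12 w h hwP2
  have hNw : ∀ x, (SimpleGraph.fromRel
      (fun a b => (a ∈ P2 ∧ b ∈ P2) ∨ (a ∈ P1 ∧ a ≠ c1 ∧ b = c2)) :
        SimpleGraph V).Adj w x ↔ (x ∈ P2 ∧ x ≠ w) := by
    intro x
    simp only [SimpleGraph.fromRel_adj]
    have f2 : x = c2 → x ∈ P2 := fun h => h ▸ hc2
    have f3 : x ∈ P1 → x ∉ P2 := hP12 x
    have f4 : w = x ↔ x = w := eq_comm
    tauto
  ext a b
  simp only [localComp_adj', hNw, SimpleGraph.fromRel_adj]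
  by_cases hab : a = b
  · simp [hab]
  have f1 : a = c1 → a ∈ P1 := fun h => h ▸ hc1
  have f2 : a = c2 → a ∈ P2 := fun h => h ▸ hc2
  have f3 : a ∈ P1 → a ∉ P2 := hP12 a
  have f4 : a = w → a ∈ P2 := fun h => h ▸ hwP2
  have g1 : b = c1 → b ∈ P1 := fun h => h ▸ hc1
  have g2 : b = c2 → b ∈ P2 := fun h => h ▸ hc2
  have g3 : b ∈ P1 → b ∉ P2 := hP12 b
  have g4 : b = w → b ∈ P2 := fun h => h ▸ hwP2
  by_cases haw : a = w <;> by_cases hbw : b = w <;>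
    by_cases hac2 : a = c2 <;> by_cases hbc2 : b = c2 <;>
    by_cases hac1 : a = c1 <;> by_cases hbc1 : b = c1 <;>
    simp_all <;> tauto

set_option maxHeartbeats 800000 in
lemma stepD17 (hdisj : Disjoint P1 P2) (hc1 : c1 ∈ P1) (hc2 : c2 ∈ P2)
    (hwP2 : w ∈ P2) (hvP1 : v ∈ P1) (hvc1 : v ≠ c1) :
    localComp (SimpleGraph.fromRel
      (fun a b => (a = w ∧ b ∈ P2) ∨ (a ∈ P1 ∧ a ≠ c1 ∧ b = c2))) v =
      SimpleGraph.fromRel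
        (fun a b => (a = w ∧ b ∈ P2) ∨ (a ∈ P1 ∧ a ≠ c1 ∧ b = c2)) := by
  have hP12 : ∀ x, x ∈ P1 → x ∉ P2 := fun x h => Set.disjoint_left.mp hdisj h
  have hvP2 : v ∉ P2 := hP12 v hvP1
  have hvw : v ≠ w := fun h => hvP2 (h ▸ hwP2)
  have hvc2 : v ≠ c2 := fun h => hvP2 (h ▸ hc2)
  apply localComp_eq_self'
  intro a b ha hb
  simp only [SimpleGraph.fromRel_adj] at ha hb
  have ha' : a = c2 := by
    have f4 : a = w → a ∈ P2 := fun h => h ▸ hwP2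
    tauto
  have hb' : b = c2 := by
    have g4 : b = w → b ∈ P2 := fun h => h ▸ hwP2
    tauto
  rw [ha', hb']

set_option maxHeartbeats 2000000 in
lemma stepE17 (hdisj : Disjoint P1 P2) (hc1 : c1 ∈ P1) (hc2 : c2 ∈ P2)
    (hwP2 : w ∈ P2) (hwc2 : w ≠ c2) :
    delVert (localComp (SimpleGraph.fromRel
      (fun a b => (a = w ∧ b ∈ P2) ∨ (a ∈ P1 ∧ a ≠ c1 ∧ b = c2))) c2) c2 =
      SimpleGraph.fromRel
        (fun a b => (a = w ∧ b ∈ P2 ∧ b ≠ c2) ∨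
          (((a ∈ P1 ∧ a ≠ c1) ∨ a = w) ∧ ((b ∈ P1 ∧ b ≠ c1) ∨ b = w))) := by
  have hP12 : ∀ x, x ∈ P1 → x ∉ P2 := fun x h => Set.disjoint_left.mp hdisj h
  have hc2P1 : c2 ∉ P1 := fun h => hP12 c2 h hc2
  have hNc2 : ∀ x, (SimpleGraph.fromRel
      (fun a b => (a = w ∧ b ∈ P2) ∨ (a ∈ P1 ∧ a ≠ c1 ∧ b = c2)) :
        SimpleGraph V).Adj c2 x ↔ ((x ∈ P1 ∧ x ≠ c1) ∨ x = w) := by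
    intro x
    simp only [SimpleGraph.fromRel_adj]
    have f1 : x ∈ P1 → x ≠ c2 := fun h he => hc2P1 (he ▸ h)
    have f2 : x = w → x ≠ c2 := fun h => h ▸ hwc2
    have f3 : c2 = x ↔ x = c2 := eq_comm
    tauto
  ext a b
  simp only [delVert_adj', localComp_adj', hNc2, SimpleGraph.fromRel_adj]
  by_cases hab : a = b
  · simp [hab]
  have f1 : a = c1 → a ∈ P1 := fun h => h ▸ hc1
  have f2 : a = c2 → a ∈ P2 := fun h => h ▸ hc2
  have f3 : a ∈ P1 → a ∉ P2 := hP12 a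
  have f4 : a = w → a ∈ P2 := fun h => h ▸ hwP2
  have g1 : b = c1 → b ∈ P1 := fun h => h ▸ hc1
  have g2 : b = c2 → b ∈ P2 := fun h => h ▸ hc2
  have g3 : b ∈ P1 → b ∉ P2 := hP12 b
  have g4 : b = w → b ∈ P2 := fun h => h ▸ hwP2
  by_cases haw : a = w <;> by_cases hbw : b = w <;>
    by_cases hac2 : a = c2 <;> by_cases hbc2 : b = c2 <;>
    by_cases hac1 : a = c1 <;> by_cases hbc1 : b = c1 <;>
    simp_all <;> tauto

set_option maxHeartbeats 3000000 in
lemma stepF17 (hdisj : Disjoint P1 P2) (hc1 : c1 ∈ P1) (hc2 : c2 ∈ P2)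
    (hwP2 : w ∈ P2) (hwc2 : w ≠ c2) (hvP1 : v ∈ P1) (hvc1 : v ≠ c1) :
    localComp (SimpleGraph.fromRel
      (fun a b => (a = w ∧ b ∈ P2 ∧ b ≠ c2) ∨
        (((a ∈ P1 ∧ a ≠ c1) ∨ a = w) ∧ ((b ∈ P1 ∧ b ≠ c1) ∨ b = w)))) v =
      binaryStar ({v} ∪ (P2 \ {c2, w})) ({w} ∪ (P1 \ {c1, v})) v w := by
  have hP12 : ∀ x, x ∈ P1 → x ∉ P2 := fun x h => Set.disjoint_left.mp hdisj h
  have hwP1 : w ∉ P1 := fun h => hP12 w h hwP2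
  have hvP2 : v ∉ P2 := hP12 v hvP1
  have hc2P1 : c2 ∉ P1 := fun h => hP12 c2 h hc2
  have hvw : v ≠ w := fun h => hvP2 (h ▸ hwP2)
  have hNv : ∀ x, (SimpleGraph.fromRel
      (fun a b => (a = w ∧ b ∈ P2 ∧ b ≠ c2) ∨
        (((a ∈ P1 ∧ a ≠ c1) ∨ a = w) ∧ ((b ∈ P1 ∧ b ≠ c1) ∨ b = w))) :
          SimpleGraph V).Adj v x ↔ (v ≠ x ∧ ((x ∈ P1 ∧ x ≠ c1) ∨ x = w)) := by
    intro x
    simp only [SimpleGraph.fromRel_adj]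
    have f1 : x ∈ P1 → x ∉ P2 := hP12 x
    have f2 : x = w → x ∈ P2 := fun h => h ▸ hwP2
    tauto
  ext a b
  simp only [localComp_adj', hNv, binaryStar, SimpleGraph.fromRel_adj,
    Set.mem_union, Set.mem_diff, Set.mem_singleton_iff, Set.mem_insert_iff]
  by_cases hab : a = b
  · simp [hab]
  have f1 : a = c1 → a ∈ P1 := fun h => h ▸ hc1
  have f2 : a = c2 → a ∈ P2 := fun h => h ▸ hc2
  have f3 : a ∈ P1 → a ∉ P2 := hP12 a
  have f4 : a = w → a ∈ P2 := fun h => h ▸ hwP2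
  have f5 : a = v → a ∈ P1 := fun h => h ▸ hvP1
  have g1 : b = c1 → b ∈ P1 := fun h => h ▸ hc1
  have g2 : b = c2 → b ∈ P2 := fun h => h ▸ hc2
  have g3 : b ∈ P1 → b ∉ P2 := hP12 b
  have g4 : b = w → b ∈ P2 := fun h => h ▸ hwP2
  have g5 : b = v → b ∈ P1 := fun h => h ▸ hvP1
  have e1 : v = a ↔ a = v := eq_comm
  have e2 : v = b ↔ b = v := eq_comm
  by_cases hav : a = v <;> by_cases hbv : b = v <;>
    by_cases haw : a = w <;> by_cases hbw : b = w <;>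
    by_cases hac2 : a = c2 <;> by_cases hbc2 : b = c2 <;>
    by_cases hac1 : a = c1 <;> by_cases hbc1 : b = c1 <;>
    simp_all <;> tauto

end Steps

/-- Double role delegation, graph level:
with `G̃ = τ_w(τ_{c1}(τ_w(S)) − c1)` and `H = τ_v(τ_{c2}(τ_v(G̃)) − c2)`, `H` is the
binary star graph `S({v} ∪ (P2 \ {c2, w}), {w} ∪ (P1 \ {c1, v}), v, w)`. -/
theorem stmt_17 {V : Type u} (P1 P2 : Set V) (hdisj : Disjoint P1 P2)
    (c1 c2 : V) (hc1 : c1 ∈ P1) (hc2 : c2 ∈ P2)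
    (w : V) (hw : w ∈ P2 \ {c2}) (v : V) (hv : v ∈ P1 \ {c1}) :
    localComp (delVert (localComp (localComp
        (localComp (delVert (localComp
          (localComp (binaryStar P1 P2 c1 c2) w) c1) c1) w) v) c2) c2) v =
      binaryStar ({v} ∪ (P2 \ {c2, w})) ({w} ∪ (P1 \ {c1, v})) v w := by
  obtain ⟨hwP2, hwc2'⟩ := hw
  obtain ⟨hvP1, hvc1'⟩ := hv
  have hwc2 : w ≠ c2 := hwc2'
  have hvc1 : v ≠ c1 := hvc1'
  rw [stepA17 hdisj hc1 hc2 hwP2 hwc2, stepB17 hdisj hc1 hc2,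
    stepC17 hdisj hc1 hc2 hwP2 hwc2, stepD17 hdisj hc1 hc2 hwP2 hvP1 hvc1,
    stepE17 hdisj hc1 hc2 hwP2 hwc2, stepF17 hdisj hc1 hc2 hwP2 hwc2 hvP1 hvc1]
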